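/- Let τ>0, γ∈ℝ, let B:[0,τ]→ℝ³ be continuous and bounded, let m₀∈ℝ³, and let θ₁, θ₂ ∈ (0,∞)². Let m¹, m² : [0,τ]→ℝ³ be differentiable with integrable derivatives, with m¹(0)=m²(0)=m₀, m¹ satisfying the Bloch equation with parameter Θ(θ₁)=(1/T₂¹,1/T₂¹,1/T₁¹) and m² satisfying the Bloch equation with parameter Θ(θ₂)=(1/T₂²,1/T₂²,1/T₁²). Suppose there exists c_τ>0 such that for both trajectories every component of ∫₀^τ m(t) dt − τ·m_e has absolute value at least c_τ. Then m¹(t)=m²(t) for all t∈[0,τ] if and only if θ₁=θ₂. -/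

import Mathlib

open MeasureTheory

/-- The equilibrium magnetization `m_e = (0,0,1)`. -/
noncomputable def me : Fin 3 → ℝ := ![0, 0, 1]

/-- The relaxation vector `Θ = (1/T₂, 1/T₂, 1/T₁)` associated with `θ = (T₁,T₂)`. -/
noncomputable def relax (θ : ℝ × ℝ) : Fin 3 → ℝ := ![1 / θ.2, 1 / θ.2, 1 / θ.1]

lemma abs3 (a b c : ℝ) : |a - b - c| ≤ |a| + |b| + |c| := by
  rw [abs_le]
  constructor <;>
    [linarith [neg_abs_le a, le_abs_self b, le_abs_self c];
     linarith [le_abs_self a, neg_abs_le b, neg_abs_le c]]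

/-- The Bloch vector field. -/
noncomputable def bv (γ : ℝ) (B : ℝ → Fin 3 → ℝ) (θ : ℝ × ℝ) (t : ℝ) (x : Fin 3 → ℝ) :
    Fin 3 → ℝ := crossProduct x (γ • B t) - fun i => relax θ i * (x i - me i)

lemma bv_lip (γ : ℝ) (B : ℝ → Fin 3 → ℝ) (θ : ℝ × ℝ) (hθ : 0 < θ.1 ∧ 0 < θ.2)
    (Bmax : ℝ) (hBbd : ∀ t, ‖B t‖ ≤ Bmax) (t : ℝ) :
    LipschitzWith (Real.toNNReal (2 * (|γ| * Bmax) + max (1 / θ.1) (1 / θ.2)))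
      (bv γ B θ t) := by
  obtain ⟨h1, h2⟩ := hθ
  set M := |γ| * Bmax with hM
  set R := max (1 / θ.1) (1 / θ.2) with hR
  have hMnn : 0 ≤ M := mul_nonneg (abs_nonneg _) ((norm_nonneg (B t)).trans (hBbd t))
  have hRnn : 0 ≤ R := le_trans (le_of_lt (by positivity)) (le_max_left _ _)
  apply LipschitzWith.of_dist_le_mul
  intro x y
  have hcoe : (2 * M + R : ℝ) ≤ (Real.toNNReal (2 * M + R) : ℝ) :=
    Real.le_coe_toNNReal _
  rw [dist_eq_norm, dist_eq_norm]
  have hbn : ‖γ • B t‖ ≤ M := by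
    rw [norm_smul]
    exact mul_le_mul_of_nonneg_left (hBbd t) (abs_nonneg γ)
  have hbi : ∀ i, |(γ • B t) i| ≤ M := fun i => (norm_le_pi_norm (γ • B t) i).trans hbn
  have hui : ∀ i, |(x - y) i| ≤ ‖x - y‖ := fun i => norm_le_pi_norm (x - y) i
  have hrel : ∀ i : Fin 3, 0 ≤ relax θ i ∧ relax θ i ≤ R := by
    intro i
    fin_cases i <;>
      simp only [relax, Matrix.cons_val_zero, Matrix.cons_val_one, Matrix.head_cons,
        Fin.isValue, Matrix.cons_val_two, Matrix.tail_cons, hR] <;>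
      [exact ⟨div_nonneg zero_le_one h2.le, le_max_right _ _⟩;
       exact ⟨div_nonneg zero_le_one h2.le, le_max_right _ _⟩;
       exact ⟨div_nonneg zero_le_one h1.le, le_max_left _ _⟩]
  have key : bv γ B θ t x - bv γ B θ t y =
      fun i => crossProduct (x - y) (γ • B t) i - relax θ i * ((x - y) i) := by
    funext i
    fin_cases i <;>
      simp [bv, crossProduct, Pi.sub_apply, Pi.smul_apply, smul_eq_mul,
        Matrix.vecHead, Matrix.vecTail, relax, me] <;> ring
  rw [key]
  have comp : ∀ i : Fin 3,
      |crossProduct (x - y) (γ • B t) i - relax θ i * ((x - y) i)| ≤ (2 * M + R) * ‖x - y‖ := by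
    intro i
    have hc : ∀ j k : Fin 3,
        |(x - y) j * (γ • B t) k - (x - y) k * (γ • B t) j - relax θ i * ((x - y) i)|
          ≤ (2 * M + R) * ‖x - y‖ := by
      intro j k
      have h1 := abs3 ((x - y) j * (γ • B t) k) ((x - y) k * (γ • B t) j)
        (relax θ i * ((x - y) i))
      have h2 : |(x - y) j * (γ • B t) k| ≤ ‖x - y‖ * M := by
        rw [abs_mul]; exact mul_le_mul (hui j) (hbi k) (abs_nonneg _) (norm_nonneg _)
      have h3 : |(x - y) k * (γ • B t) j| ≤ ‖x - y‖ * M := by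
        rw [abs_mul]; exact mul_le_mul (hui k) (hbi j) (abs_nonneg _) (norm_nonneg _)
      have h4 : |relax θ i * ((x - y) i)| ≤ R * ‖x - y‖ := by
        rw [abs_mul, abs_of_nonneg (hrel i).1]
        exact mul_le_mul (hrel i).2 (hui i) (abs_nonneg _) hRnn
      nlinarith [h1, h2, h3, h4]
    fin_cases i <;>
      [(have h := hc 1 2); (have h := hc 2 0); (have h := hc 0 1)] <;>
      simp only [Pi.sub_apply, Pi.smul_apply, smul_eq_mul] at h <;>
      simp only [crossProduct, LinearMap.mk₂_apply, Matrix.cons_val_zero, Matrix.cons_val_one,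
        Matrix.head_cons, Matrix.cons_val_two, Matrix.tail_cons, Pi.sub_apply, Pi.smul_apply,
        smul_eq_mul, Fin.isValue] <;>
      (convert h using 2) <;> ring_nf <;> rfl
  calc ‖fun i => crossProduct (x - y) (γ • B t) i - relax θ i * ((x - y) i)‖
      ≤ (2 * M + R) * ‖x - y‖ := by
        rw [pi_norm_le_iff_of_nonneg (by positivity)]
        intro i; simpa using comp i
    _ ≤ (Real.toNNReal (2 * M + R) : ℝ) * ‖x - y‖ :=
        mul_le_mul_of_nonneg_right hcoe (norm_nonneg _)

lemma bv_contOn (γ : ℝ) (B : ℝ → Fin 3 → ℝ) (θ : ℝ × ℝ) (hB : Continuous B)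
    {m : ℝ → Fin 3 → ℝ} {s : Set ℝ} (hm : ContinuousOn m s) :
    ContinuousOn (fun t => bv γ B θ t (m t)) s := by
  have hmc : ∀ j : Fin 3, ContinuousOn (fun t => m t j) s := fun j =>
    (continuous_apply j).comp_continuousOn hm
  have hBc : ∀ j : Fin 3, Continuous (fun t => B t j) := fun j =>
    (continuous_apply j).comp hB
  apply continuousOn_pi.2
  intro i
  have : (fun t => bv γ B θ t (m t) i) =
      fun t => crossProduct (m t) (γ • B t) i - relax θ i * (m t i - me i) := rfl
  rw [this]
  apply ContinuousOn.sub
  · fin_cases i <;>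
      · simp only [crossProduct, LinearMap.mk₂_apply, Matrix.cons_val_zero, Matrix.cons_val_one,
          Matrix.head_cons, Matrix.cons_val_two, Matrix.tail_cons, Pi.smul_apply, smul_eq_mul,
          Fin.isValue]
        exact ((hmc _).mul ((hBc _).comp_continuousOn continuousOn_id |>.const_smul γ |>.mono
          (fun x hx => hx))).sub ((hmc _).mul (((hBc _).continuousOn).const_smul γ))
  · exact (continuousOn_const.mul ((hmc i).sub continuousOn_const))

lemma deriv_at_zero (τ : ℝ) (hτ : 0 < τ) (w m : ℝ → Fin 3 → ℝ)
    (hw : ContinuousOn w (Set.Icc 0 τ)) (hm : ContinuousOn m (Set.Icc 0 τ))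
    (hd : ∀ t ∈ Set.Ioo 0 τ, HasDerivAt m (w t) t) :
    HasDerivWithinAt m (w 0) (Set.Ici 0) 0 := by
  have hIcc : Set.Icc (0:ℝ) τ ∈ nhdsWithin 0 (Set.Ici 0) := by
    rw [← Set.Ici_inter_Iic]
    exact Filter.inter_mem self_mem_nhdsWithin
      (mem_nhdsWithin_of_mem_nhds (Iic_mem_nhds hτ))
  have hIcc' : Set.Icc (0:ℝ) τ ∈ nhdsWithin 0 (Set.Ioi 0) :=
    nhdsWithin_mono 0 Set.Ioi_subset_Ici_self hIcc
  have hFeq : ∀ t ∈ Set.Icc (0:ℝ) τ, (∫ s in (0:ℝ)..t, w s) = m t - m 0 := by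
    intro t ht
    apply intervalIntegral.integral_eq_sub_of_hasDeriv_right_of_le ht.1
      (hm.mono (Set.Icc_subset_Icc_right ht.2))
      (fun x hx => (hd x ⟨hx.1, lt_of_lt_of_le hx.2 ht.2⟩).hasDerivWithinAt)
    apply ContinuousOn.intervalIntegrable
    rw [Set.uIcc_of_le ht.1]
    exact hw.mono (Set.Icc_subset_Icc_right ht.2)
  have hmain : HasDerivWithinAt (fun u => m 0 + ∫ s in (0:ℝ)..u, w s) (w 0) (Set.Ici 0) 0 := by
    refine HasDerivWithinAt.const_add _ ?_
    exact intervalIntegral.integral_hasDerivWithinAt_right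
      ⟨by simp, by simp⟩
      ⟨Set.Icc 0 τ, hIcc', (hw.aestronglyMeasurable measurableSet_Icc)⟩
      ((hw 0 ⟨le_rfl, hτ.le⟩).mono_of_mem_nhdsWithin hIcc')
  have : HasDerivWithinAt m (w 0) (Set.Icc 0 τ) 0 := by
    refine (hmain.mono (fun x hx => hx.1)).congr (fun u hu => ?_) (by simp)
    rw [hFeq u hu]; abel
  exact this.mono_of_mem_nhdsWithin hIcc

/-- Bijectivity of the Bloch mapping: two Bloch trajectories with the same initial value and
with parameters `θ₁`, `θ₂`, both satisfying the nondegeneracy condition on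
`∫₀^τ m - τ • m_e`, coincide on `[0,τ]` if and only if `θ₁ = θ₂`. -/
theorem stmt2 (τ : ℝ) (hτ : 0 < τ) (γ : ℝ) (B : ℝ → Fin 3 → ℝ)
    (hBcont : Continuous B) (Bmax : ℝ) (hBbd : ∀ t, ‖B t‖ ≤ Bmax)
    (m0 : Fin 3 → ℝ) (θ1 θ2 : ℝ × ℝ)
    (hθ1 : 0 < θ1.1 ∧ 0 < θ1.2) (hθ2 : 0 < θ2.1 ∧ 0 < θ2.2)
    (m1 m1' m2 m2' : ℝ → Fin 3 → ℝ)
    (h1init : m1 0 = m0) (h2init : m2 0 = m0)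
    (hd1 : ∀ t ∈ Set.Icc (0:ℝ) τ, HasDerivAt m1 (m1' t) t)
    (hd2 : ∀ t ∈ Set.Icc (0:ℝ) τ, HasDerivAt m2 (m2' t) t)
    (hint1 : ∀ i, IntervalIntegrable (fun t => m1' t i) volume 0 τ)
    (hint2 : ∀ i, IntervalIntegrable (fun t => m2' t i) volume 0 τ)
    (hb1 : ∀ t ∈ Set.Ioo (0:ℝ) τ,
      m1' t = crossProduct (m1 t) (γ • B t) - fun i => relax θ1 i * (m1 t i - me i))
    (hb2 : ∀ t ∈ Set.Ioo (0:ℝ) τ,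
      m2' t = crossProduct (m2 t) (γ • B t) - fun i => relax θ2 i * (m2 t i - me i))
    (cτ : ℝ) (hcτ : 0 < cτ)
    (hω1 : ∀ i : Fin 3, cτ ≤ |(∫ t in (0:ℝ)..τ, m1 t i) - τ * me i|)
    (hω2 : ∀ i : Fin 3, cτ ≤ |(∫ t in (0:ℝ)..τ, m2 t i) - τ * me i|) :
    (∀ t ∈ Set.Icc (0:ℝ) τ, m1 t = m2 t) ↔ θ1 = θ2 := by
  have hm1c : ContinuousOn m1 (Set.Icc 0 τ) := fun s hs =>
    (hd1 s hs).continuousAt.continuousWithinAt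
  have hm2c : ContinuousOn m2 (Set.Icc 0 τ) := fun s hs =>
    (hd2 s hs).continuousAt.continuousWithinAt
  constructor
  · -- m1 = m2 on [0,τ] → θ1 = θ2
    intro heq
    have hder_eq : ∀ t ∈ Set.Ioo (0:ℝ) τ, m1' t = m2' t := by
      intro t ht
      have hmem : Set.Ioo (0:ℝ) τ ∈ nhds t := Ioo_mem_nhds ht.1 ht.2
      have hee : m2 =ᶠ[nhds t] m1 :=
        Filter.eventuallyEq_of_mem hmem
          (fun x hx => (heq x (Set.Ioo_subset_Icc_self hx)).symm)
      exact (((hd1 t (Set.Ioo_subset_Icc_self ht)).congr_of_eventuallyEq hee).unique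
        (hd2 t (Set.Ioo_subset_Icc_self ht)))
    have hkey : ∀ (i : Fin 3), ∀ t ∈ Set.Ioo (0:ℝ) τ,
        relax θ1 i * (m1 t i - me i) = relax θ2 i * (m1 t i - me i) := by
      intro i t ht
      have h := hder_eq t ht
      rw [hb1 t ht, hb2 t ht, ← heq t (Set.Ioo_subset_Icc_self ht)] at h
      have h2 := congrFun h i
      simp only [Pi.sub_apply] at h2
      linarith
    have hrelax : ∀ i : Fin 3, relax θ1 i = relax θ2 i := by
      intro i
      have hXne : (∫ t in (0:ℝ)..τ, m1 t i) - τ * me i ≠ 0 := by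
        intro h0
        have := hω1 i
        rw [h0, abs_zero] at this
        linarith
      have hne : ∀ᵐ t ∂(volume : Measure ℝ), t ≠ τ := by
        rw [MeasureTheory.ae_iff]
        simpa using Real.volume_singleton
      have hae : ∀ᵐ t ∂(volume : Measure ℝ), t ∈ Set.uIoc (0:ℝ) τ →
          relax θ1 i * (m1 t i - me i) = relax θ2 i * (m1 t i - me i) := by
        filter_upwards [hne] with t htne htmem
        rw [Set.uIoc_of_le hτ.le] at htmem
        exact hkey i t ⟨htmem.1, lt_of_le_of_ne htmem.2 htne⟩
      have hIeq : (∫ t in (0:ℝ)..τ, relax θ1 i * (m1 t i - me i)) =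
          ∫ t in (0:ℝ)..τ, relax θ2 i * (m1 t i - me i) :=
        intervalIntegral.integral_congr_ae hae
      have hm1i : IntervalIntegrable (fun t => m1 t i) volume 0 τ := by
        apply ContinuousOn.intervalIntegrable
        rw [Set.uIcc_of_le hτ.le]
        exact (continuous_apply i).comp_continuousOn hm1c
      have hsub : (∫ t in (0:ℝ)..τ, (m1 t i - me i)) =
          (∫ t in (0:ℝ)..τ, m1 t i) - τ * me i := by
        rw [intervalIntegral.integral_sub hm1i intervalIntegrable_const,
          intervalIntegral.integral_const, smul_eq_mul, sub_zero]
      rw [intervalIntegral.integral_const_mul, intervalIntegral.integral_const_mul, hsub] at hIeq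
      exact mul_right_cancel₀ hXne hIeq
    have e2 : relax θ1 0 = relax θ2 0 := hrelax 0
    have e1 : relax θ1 2 = relax θ2 2 := hrelax 2
    simp only [relax, Matrix.cons_val_zero, Matrix.cons_val_two, Matrix.tail_cons,
      Matrix.head_cons, one_div] at e1 e2
    exact Prod.ext (inv_inj.mp e1) (inv_inj.mp e2)
  · -- θ1 = θ2 → m1 = m2 on [0,τ]
    intro h t ht
    subst h
    have hlip := fun s => bv_lip γ B θ1 hθ1 Bmax hBbd s
    have hder1 : ∀ s ∈ Set.Ioo (0:ℝ) τ, HasDerivAt m1 (bv γ B θ1 s (m1 s)) s := by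
      intro s hs
      have : bv γ B θ1 s (m1 s) = m1' s := (hb1 s hs).symm
      rw [this]
      exact hd1 s (Set.Ioo_subset_Icc_self hs)
    have hder2 : ∀ s ∈ Set.Ioo (0:ℝ) τ, HasDerivAt m2 (bv γ B θ1 s (m2 s)) s := by
      intro s hs
      have : bv γ B θ1 s (m2 s) = m2' s := (hb2 s hs).symm
      rw [this]
      exact hd2 s (Set.Ioo_subset_Icc_self hs)
    have hf' : ∀ s ∈ Set.Ico (0:ℝ) τ, HasDerivWithinAt m1 (bv γ B θ1 s (m1 s)) (Set.Ici s) s := by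
      intro s hs
      rcases eq_or_lt_of_le hs.1 with h0 | h0
      · rw [← h0]
        exact deriv_at_zero τ hτ (fun u => bv γ B θ1 u (m1 u)) m1
          (bv_contOn γ B θ1 hBcont hm1c) hm1c hder1
      · exact (hder1 s ⟨h0, hs.2⟩).hasDerivWithinAt
    have hg' : ∀ s ∈ Set.Ico (0:ℝ) τ, HasDerivWithinAt m2 (bv γ B θ1 s (m2 s)) (Set.Ici s) s := by
      intro s hs
      rcases eq_or_lt_of_le hs.1 with h0 | h0
      · rw [← h0]
        exact deriv_at_zero τ hτ (fun u => bv γ B θ1 u (m2 u)) m2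
          (bv_contOn γ B θ1 hBcont hm2c) hm2c hder2
      · exact (hder2 s ⟨h0, hs.2⟩).hasDerivWithinAt
    exact ODE_solution_unique hlip hm1c hf' hm2c hg' (h1init.trans h2init.symm) ht
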